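/- Let t ≥ 1, let n be a nonzero integer, and let s, s', θ, θ' ∈ ℝ with |s| + |s'| ≤ t. Then |H(s, θ, s' + 2nt, θ')| ≤ 2 e^{|s| + |s'| − 2|n| t}. -/

import Mathlib

open MeasureTheory Filter Real

/-- The covariance kernel `H(s,θ,s',θ') = log( max(e^{-s}, e^{-s'}) / |e^{-s+iθ} - e^{-s'+iθ'}| )`
of the lateral part of the GFF on the infinite cylinder `ℝ × S¹`. -/
noncomputable def Hker (s θ s' θ' : ℝ) : ℝ :=
  Real.log (max (Real.exp (-s)) (Real.exp (-s')) /
    ‖Complex.exp (-(s : ℂ) + (θ : ℂ) * Complex.I)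
      - Complex.exp (-(s' : ℂ) + (θ' : ℂ) * Complex.I)‖)

lemma abs_exp_aux (u θ : ℝ) :
    ‖Complex.exp (-(u : ℂ) + (θ : ℂ) * Complex.I)‖ = Real.exp (-u) := by
  rw [Complex.norm_exp]
  congr 1
  simp

lemma Hker_symm (s θ s' θ' : ℝ) : Hker s θ s' θ' = Hker s' θ' s θ := by
  unfold Hker
  rw [max_comm, norm_sub_rev]

lemma Hker_abs_le (u θ v θ' : ℝ) (hr : Real.exp (u - v) ≤ 1/2) :
    |Hker u θ v θ'| ≤ 2 * Real.exp (u - v) := by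
  set r := Real.exp (u - v) with hrdef
  have hr0 : 0 < r := Real.exp_pos _
  have huv : u ≤ v := by
    have := Real.add_one_le_exp (u - v)
    rw [← hrdef] at this
    linarith
  set z := Complex.exp (-(u : ℂ) + (θ : ℂ) * Complex.I)
  set w := Complex.exp (-(v : ℂ) + (θ' : ℂ) * Complex.I)
  have hz : ‖z‖ = Real.exp (-u) := abs_exp_aux u θ
  have hw : ‖w‖ = Real.exp (-v) := abs_exp_aux v θ'
  have hwr : Real.exp (-v) = r * Real.exp (-u) := by
    rw [hrdef, ← Real.exp_add]; ring_nf
  have hmax : max (Real.exp (-u)) (Real.exp (-v)) = Real.exp (-u) :=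
    max_eq_left (Real.exp_le_exp.mpr (by linarith))
  set A := ‖z - w‖ with hA
  have hAlow : (1 - r) * Real.exp (-u) ≤ A := by
    have h1 : ‖z‖ - ‖w‖ ≤ A := by
      rw [hA]
      exact norm_sub_norm_le z w
    rw [hz, hw, hwr] at h1
    linarith
  have hAhigh : A ≤ (1 + r) * Real.exp (-u) := by
    have h1 : A ≤ ‖z‖ + ‖w‖ := by
      rw [hA]
      exact norm_sub_le z w
    rw [hz, hw, hwr] at h1
    linarith
  have hApos : 0 < A := lt_of_lt_of_le (mul_pos (by linarith : (0:ℝ) < 1 - r) (Real.exp_pos _)) hAlow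
  have hupos : 0 < Real.exp (-u) := Real.exp_pos _
  -- bounds on the ratio
  have hratio_hi : Real.exp (-u) / A ≤ 1 / (1 - r) := by
    rw [div_le_div_iff₀ hApos (by linarith)]
    nlinarith
  have hratio_lo : 1 / (1 + r) ≤ Real.exp (-u) / A := by
    rw [div_le_div_iff₀ (by linarith) hApos]
    nlinarith
  have hHker : Hker u θ v θ' = Real.log (Real.exp (-u) / A) := by
    unfold Hker
    rw [hmax]
  -- key log bounds
  have hlog1 : Real.log (1 - r) ≥ -(2 * r) := by
    rw [ge_iff_le, Real.le_log_iff_exp_le (by linarith)]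
    have h1 : 1 + 2*r ≤ Real.exp (2*r) := by
      have := Real.add_one_le_exp (2*r); linarith
    have h2 : Real.exp (-(2*r)) = 1 / Real.exp (2*r) := by
      rw [Real.exp_neg]; ring
    rw [h2]
    rw [div_le_iff₀ (Real.exp_pos _)]
    nlinarith [Real.exp_pos (2*r)]
  have hlog2 : Real.log (1 + r) ≤ r := by
    have := Real.log_le_sub_one_of_pos (x := 1 + r) (by linarith)
    linarith
  rw [hHker, abs_le]
  constructor
  · have : Real.log (1 / (1 + r)) ≤ Real.log (Real.exp (-u) / A) :=
      Real.log_le_log (by positivity) hratio_lo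
    rw [Real.log_div one_ne_zero (by linarith), Real.log_one] at this
    linarith
  · have : Real.log (Real.exp (-u) / A) ≤ Real.log (1 / (1 - r)) :=
      Real.log_le_log (by positivity) hratio_hi
    rw [Real.log_div one_ne_zero (by linarith), Real.log_one] at this
    linarith

lemma exp_neg_one_le_half : Real.exp (-1 : ℝ) ≤ 1/2 := by
  rw [Real.exp_neg]
  rw [inv_le_comm₀ (Real.exp_pos _) (by norm_num)]
  calc (1/2 : ℝ)⁻¹ = 2 := by norm_num
  _ ≤ Real.exp 1 := by nlinarith [Real.exp_one_gt_d9]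

/-- for `t ≥ 1`, `n ≠ 0` and `|s| + |s'| ≤ t`,
`|H(s, θ, s' + 2nt, θ')| ≤ 2 e^{|s| + |s'| - 2|n|t}`. -/
theorem abs_Hker_translate_le (t : ℝ) (ht : 1 ≤ t) (n : ℤ) (hn : n ≠ 0)
    (s s' θ θ' : ℝ) (h : |s| + |s'| ≤ t) :
    |Hker s θ (s' + 2 * (n : ℝ) * t) θ'| ≤ 2 * Real.exp (|s| + |s'| - 2 * |(n : ℝ)| * t) := by
  have hs : s ≤ |s| := le_abs_self s
  have hs' : s' ≤ |s'| := le_abs_self s'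
  have hms : -s ≤ |s| := neg_le_abs s
  have hms' : -s' ≤ |s'| := neg_le_abs s'
  rcases hn.lt_or_gt with hneg | hpos
  · -- n < 0
    have hn1 : (n : ℝ) ≤ -1 := by exact_mod_cast (by omega : n ≤ -1)
    have habs : |(n : ℝ)| = -(n : ℝ) := abs_of_neg (by exact_mod_cast hneg)
    have hexp : s' + 2 * (n:ℝ) * t - s ≤ |s| + |s'| - 2 * |(n:ℝ)| * t := by
      rw [habs]; nlinarith
    have hsmall : Real.exp (s' + 2 * (n:ℝ) * t - s) ≤ 1/2 := by
      refine le_trans (le_trans (Real.exp_le_exp.mpr ?_) exp_neg_one_le_half) le_rfl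
      rw [habs] at hexp
      nlinarith
    rw [Hker_symm]
    calc |Hker (s' + 2 * (n:ℝ) * t) θ' s θ| ≤ 2 * Real.exp (s' + 2 * (n:ℝ) * t - s) :=
          Hker_abs_le _ _ _ _ hsmall
    _ ≤ 2 * Real.exp (|s| + |s'| - 2 * |(n:ℝ)| * t) := by
        have := Real.exp_le_exp.mpr hexp; linarith
  · -- n > 0
    have hn1 : (1:ℝ) ≤ (n : ℝ) := by exact_mod_cast hpos
    have habs : |(n : ℝ)| = (n : ℝ) := abs_of_pos (by exact_mod_cast hpos)
    have hexp : s - (s' + 2 * (n:ℝ) * t) ≤ |s| + |s'| - 2 * |(n:ℝ)| * t := by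
      rw [habs]; nlinarith
    have hsmall : Real.exp (s - (s' + 2 * (n:ℝ) * t)) ≤ 1/2 := by
      refine le_trans (Real.exp_le_exp.mpr ?_) exp_neg_one_le_half
      rw [habs] at hexp
      nlinarith
    calc |Hker s θ (s' + 2 * (n:ℝ) * t) θ'| ≤ 2 * Real.exp (s - (s' + 2 * (n:ℝ) * t)) :=
          Hker_abs_le _ _ _ _ hsmall
    _ ≤ 2 * Real.exp (|s| + |s'| - 2 * |(n:ℝ)| * t) := by
        have := Real.exp_le_exp.mpr hexp; linarith
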